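/- For every positive integer r, ∑_{k=r}^∞ ((-1)^k * binomial(k,r)) / (k^2 * 2^k) = ((-1)^r / r) * ∑_{k=r}^∞ 1/(k * 3^k). -/

import Mathlib

open Finset

-- orthogonality
lemma myOrthoD (m n : ℕ) :
    ∑ k ∈ range (n+2), (-1:ℤ)^k * ((k+m).choose m) * ((n+m+1).choose (k+m)) = 0 := by
  have h : ∀ k ∈ range (n+2), (-1:ℤ)^k * ((k+m).choose m) * ((n+m+1).choose (k+m))
      = ((n+m+1).choose m : ℤ) * ((-1)^k * ((n+1).choose k)) := by
    intro k hk
    simp only [mem_range] at hk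
    have h1 : (n+m+1).choose (k+m) * (k+m).choose m
        = (n+m+1).choose m * (n+1).choose k := by
      have := Nat.choose_mul (n := n+m+1) (k := k+m) (s := m) (by omega)
      simpa [show n+m+1-m = n+1 from by omega] using this
    have h1' : ((n+m+1).choose (k+m) : ℤ) * ((k+m).choose m)
        = ((n+m+1).choose m : ℤ) * ((n+1).choose k) := by exact_mod_cast congrArg (Nat.cast : ℕ → ℤ) h1
    linear_combination (-1:ℤ)^k * h1'
  rw [Finset.sum_congr rfl h, ← Finset.mul_sum,
    Int.alternating_sum_range_choose_of_ne (Nat.succ_ne_zero n), mul_zero]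

lemma myKeyZ (m : ℕ) : ∀ n : ℕ,
    ∑ k ∈ range (n+1), (-1:ℤ)^k * ((k+m).choose m) * ((n+m+1).choose (k+m+1)) = 1 := by
  intro n
  induction n with
  | zero => simp
  | succ n ih =>
    have split : ∀ k ∈ range (n+2),
        (-1:ℤ)^k * ((k+m).choose m) * ((n+1+m+1).choose (k+m+1))
        = (-1:ℤ)^k * ((k+m).choose m) * ((n+m+1).choose (k+m+1))
          + (-1:ℤ)^k * ((k+m).choose m) * ((n+m+1).choose (k+m)) := by
      intro k _
      have : (n+1+m+1).choose (k+m+1) = (n+m+1).choose (k+m) + (n+m+1).choose (k+m+1) := by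
        have := Nat.choose_succ_succ (n+m+1) (k+m)
        simpa [Nat.add_assoc, Nat.add_comm, Nat.add_left_comm] using this
      rw [this]; push_cast; ring
    rw [Finset.sum_congr rfl split, Finset.sum_add_distrib, myOrthoD, add_zero,
      Finset.sum_range_succ]
    have hz : (n+m+1).choose (n+1+m+1) = 0 := Nat.choose_eq_zero_of_lt (by omega)
    rw [hz]
    push_cast
    rw [mul_zero, add_zero, ih]

lemma myKeyR (m n : ℕ) :
    ∑ k ∈ range (n+1), (-1:ℝ)^k * ((k+m).choose m) * ((n+m+1).choose (k+m+1)) = 1 := by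
  have := congrArg (Int.cast : ℤ → ℝ) (myKeyZ m n)
  push_cast at this
  simpa using this

lemma myFinId (m n : ℕ) :
    ∑ k ∈ range (n+1), (-1:ℝ)^k * ((k+m).choose m) * ((n+m).choose (k+m)) / ((k:ℝ)+m+1)
      = 1 / ((n:ℝ)+m+1) := by
  have hterm : ∀ k ∈ range (n+1),
      (-1:ℝ)^k * ((k+m).choose m) * ((n+m).choose (k+m)) / ((k:ℝ)+m+1)
      = (-1:ℝ)^k * ((k+m).choose m) * ((n+m+1).choose (k+m+1)) / ((n:ℝ)+m+1) := by
    intro k _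
    have h := Nat.add_one_mul_choose_eq (n+m) (k+m)
    have h' : ((n:ℝ)+m+1) * ((n+m).choose (k+m)) = ((n+m+1).choose (k+m+1)) * ((k:ℝ)+m+1) := by
      exact_mod_cast congrArg (Nat.cast : ℕ → ℝ) h
    rw [div_eq_div_iff (by positivity) (by positivity)]
    linear_combination ((-1:ℝ)^k * ((k+m).choose m)) * h'
  rw [Finset.sum_congr rfl hterm, ← Finset.sum_div, myKeyR]
open Finset

lemma myTsumAntidiag {f : ℕ × ℕ → ℝ} (hf : Summable f) :
    ∑' p : ℕ × ℕ, f p = ∑' n : ℕ, ∑ kl ∈ antidiagonal n, f kl := by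
  rw [← Finset.HasAntidiagonal.sigmaAntidiagonalEquivProd.tsum_eq f]
  rw [show (fun c => f (Finset.HasAntidiagonal.sigmaAntidiagonalEquivProd c)) = f ∘ Finset.HasAntidiagonal.sigmaAntidiagonalEquivProd from rfl]
  rw [Summable.tsum_sigma' (fun n => (hasSum_fintype _).summable)
      (Finset.HasAntidiagonal.sigmaAntidiagonalEquivProd.summable_iff.2 hf)]
  simp only [Function.comp, Finset.HasAntidiagonal.sigmaAntidiagonalEquivProd_apply]
  exact tsum_congr fun n => by rw [tsum_fintype, Finset.sum_coe_sort]

open Finset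

section aux
variable (m : ℕ)

noncomputable def myE (k : ℕ) : ℝ :=
  ((-1:ℝ)^k * ((k+m).choose m)) / (((k:ℝ)+m+1) * 3^(k+m+1))

noncomputable def myH (k j : ℕ) : ℝ := ((j+(k+m)).choose (k+m) : ℝ) * (1/3)^j

noncomputable def myA (k : ℕ) : ℝ :=
  ((-1:ℝ)^k * ((k+m).choose m)) / (((k:ℝ)+m+1) * 2^(k+m+1))

lemma myHsum (k : ℕ) : HasSum (myH m k) ((3/2:ℝ)^(k+m+1)) := by
  have h3 : ‖(1/3 : ℝ)‖ < 1 := by rw [Real.norm_eq_abs, abs_lt]; constructor <;> norm_num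
  have H := hasSum_choose_mul_geometric_of_norm_lt_one (𝕜 := ℝ) (k+m) h3
  have hv : (1:ℝ) / (1 - 1/3)^(k+m+1) = (3/2)^(k+m+1) := by
    rw [show (1:ℝ) - 1/3 = 2/3 by norm_num, one_div, ← inv_pow]
    norm_num
  rw [hv] at H
  exact H

lemma myEH (k : ℕ) : HasSum (fun j => myE m k * myH m k j) (myA m k) := by
  have H := (myHsum m k).mul_left (myE m k)
  have hv : myE m k * (3/2)^(k+m+1) = myA m k := by
    unfold myE myA
    have h1 : ((k:ℝ)+m+1) ≠ 0 := by positivity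
    rw [div_pow]
    field_simp
  rwa [hv] at H

lemma myEabs (k : ℕ) : |myE m k| = (((k+m).choose m : ℝ)) / (((k:ℝ)+m+1) * 3^(k+m+1)) := by
  unfold myE
  have h1 : |((-1:ℝ)^k * ((k+m).choose m))| = ((k+m).choose m : ℝ) := by
    rw [abs_mul, abs_pow, abs_neg, abs_one, one_pow, one_mul, Nat.abs_cast]
  have h2 : |(((k:ℝ)+m+1) * 3^(k+m+1))| = ((k:ℝ)+m+1) * 3^(k+m+1) :=
    abs_of_pos (by positivity)
  rw [abs_div, h1, h2]

lemma myHnonneg (k j : ℕ) : 0 ≤ myH m k j := by unfold myH; positivity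

lemma mySabs : Summable (fun p : ℕ × ℕ => |myE m p.1 * myH m p.1 p.2|) := by
  rw [summable_prod_of_nonneg (fun p => abs_nonneg _)]
  have habs : ∀ k j, |myE m k * myH m k j| = |myE m k| * myH m k j := by
    intro k j
    rw [abs_mul, abs_of_nonneg (myHnonneg m k j)]
  constructor
  · intro k
    apply Summable.congr (((myHsum m k).summable).mul_left |myE m k|)
    intro j
    rw [habs]
  · have hv : ∀ k, ∑' j, |myE m k * myH m k j| = |myE m k| * (3/2)^(k+m+1) := by
      intro k
      rw [tsum_congr (fun j => habs k j)]
      exact ((myHsum m k).mul_left |myE m k|).tsum_eq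
    have hcomp : Summable (fun k : ℕ => (((k+m).choose m : ℕ) : ℝ) * (1/2)^k) := by
      have h2 : ‖(1/2:ℝ)‖ < 1 := by rw [Real.norm_eq_abs, abs_lt]; constructor <;> norm_num
      exact summable_choose_mul_geometric_of_norm_lt_one m h2
    apply Summable.of_nonneg_of_le
      (fun k => tsum_nonneg fun j => abs_nonneg _) (fun k => ?_) hcomp
    rw [hv k, myEabs m k]
    have e1 : (((k+m).choose m : ℝ)) / (((k:ℝ)+m+1) * 3^(k+m+1)) * (3/2)^(k+m+1)
        = (((k+m).choose m : ℝ)) / (((k:ℝ)+m+1) * 2^(k+m+1)) := by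
      have h1 : ((k:ℝ)+m+1) ≠ 0 := by positivity
      rw [div_pow]
      field_simp
    rw [e1]
    have e2 : (((k+m).choose m : ℝ)) * (1/2)^k = (((k+m).choose m : ℝ)) / 2^k := by
      rw [div_pow, one_pow, div_eq_mul_inv, div_eq_mul_inv, one_mul]
    rw [e2]
    apply div_le_div_of_nonneg_left (by positivity) (by positivity)
    have h4 : (2:ℝ)^k ≤ 2^(k+m+1) := by
      apply pow_le_pow_right₀ (by norm_num) (by omega)
    nlinarith [pow_pos (show (0:ℝ) < 2 by norm_num) (k+m+1),
      (show (1:ℝ) ≤ (k:ℝ)+m+1 by nlinarith [Nat.cast_nonneg (α := ℝ) k, Nat.cast_nonneg (α := ℝ) m])]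

end aux

lemma myDiag (m n : ℕ) :
    ∑ kl ∈ antidiagonal n, myE m kl.1 * myH m kl.1 kl.2
      = 1 / (((n:ℝ)+m+1) * 3^(n+m+1)) := by
  rw [Finset.Nat.sum_antidiagonal_eq_sum_range_succ_mk]
  have hterm : ∀ k ∈ range (n+1), myE m k * myH m k (n-k)
      = ((-1:ℝ)^k * ((k+m).choose m) * ((n+m).choose (k+m)) / ((k:ℝ)+m+1)) * (1/3)^(n+m+1) := by
    intro k hk
    simp only [mem_range] at hk
    unfold myE myH
    rw [show n-k+(k+m) = n+m by omega]
    have hpow : ((1:ℝ)/3)^(n+m+1) = (1/3)^(n-k) * (1/3)^(k+m+1) := by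
      rw [← pow_add]; congr 1; omega
    rw [hpow]
    have h1 : ((k:ℝ)+m+1) ≠ 0 := by positivity
    field_simp
    all_goals try ring
    all_goals simp only [one_div, inv_pow]; field_simp
  rw [Finset.sum_congr rfl hterm, ← Finset.sum_mul, myFinId]
  rw [div_pow, one_pow, div_mul_div_comm, one_mul]

lemma myMain (m : ℕ) :
    ∑' k, myA m k = ∑' n : ℕ, 1 / (((n:ℝ)+m+1) * 3^(n+m+1)) := by
  have hS : Summable (fun p : ℕ × ℕ => myE m p.1 * myH m p.1 p.2) := (mySabs m).of_abs
  have t1 : ∑' p : ℕ × ℕ, myE m p.1 * myH m p.1 p.2 = ∑' k, ∑' j, myE m k * myH m k j :=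
    Summable.tsum_prod' hS (fun k => (myEH m k).summable)
  rw [← tsum_congr (fun k => (myEH m k).tsum_eq), ← t1, myTsumAntidiag hS]
  exact tsum_congr (fun n => myDiag m n)

theorem renyi_series_identity_third (r : ℕ) (hr : 0 < r) :
    ∑' k : ℕ, ((-1 : ℝ) ^ (k + r) * ((k + r).choose r))
        / (((k + r) : ℝ) ^ 2 * 2 ^ (k + r))
      = ((-1 : ℝ) ^ r / r) * ∑' k : ℕ, 1 / (((k + r) : ℝ) * 3 ^ (k + r)) := by
  obtain ⟨m, rfl⟩ : ∃ m, r = m + 1 := ⟨r - 1, by omega⟩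
  have hA : ∀ k : ℕ, ((-1 : ℝ) ^ (k + (m+1)) * ((k + (m+1)).choose (m+1)))
        / (((k:ℝ) + ((m+1 : ℕ) : ℝ)) ^ 2 * 2 ^ (k + (m+1)))
      = ((-1:ℝ)^(m+1)/((m:ℝ)+1)) * myA m k := by
    intro k
    have h := Nat.add_one_mul_choose_eq (k+m) m
    have h' : ((k:ℝ)+m+1) * ((k+m).choose m) = ((k+m+1).choose (m+1)) * ((m:ℝ)+1) := by
      exact_mod_cast congrArg (Nat.cast : ℕ → ℝ) h
    unfold myA
    rw [show k + (m+1) = k+m+1 from by omega]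
    push_cast
    rw [div_mul_div_comm, div_eq_div_iff (by positivity) (by positivity)]
    linear_combination (-(-1:ℝ)^k * (-1:ℝ)^(m+1) * 2^(k+m+1) * ((k:ℝ)+m+1)) * h'
  rw [tsum_congr hA, tsum_mul_left, myMain m]
  congr 1
  · push_cast; ring
  · exact tsum_congr fun n => by push_cast; ring_nf
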